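/- Let 1 ≥ p_1 ≥ ... ≥ p_D ≥ 0, fix d with 1 < d < D, and let ζ ≥ 0 satisfy p_d + ζ ≤ 1 and ζ ≤ p_{d+1}. Define p'_i = p_i for i ∉ {d, d+1}, p'_d = p_d + ζ, p'_{d+1} = p_{d+1} − ζ. Then Σ_{k=1}^D Π_{i=1}^k p'_i ≥ Σ_{k=1}^D Π_{i=1}^k p_i. -/

import Mathlib

open Finset

/-- Concentrated case: transferring an amount `ζ` of acceptance probability from
position `d+1` to the adjacent earlier position `d` does not decrease the expected
accepted length `∑_{k=1}^D ∏_{i=1}^k p i`. -/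
theorem stmt2 (D d : ℕ) (hd : 1 < d) (hdD : d < D) (p : ℕ → ℝ) (ζ : ℝ)
    (hp1 : p 1 ≤ 1) (hpD : 0 ≤ p D)
    (hmono : ∀ i, 1 ≤ i → i < D → p (i + 1) ≤ p i)
    (hζ : 0 ≤ ζ) (hζd : p d + ζ ≤ 1) (hζd1 : ζ ≤ p (d + 1)) :
    ∑ k ∈ Finset.Icc 1 D, ∏ i ∈ Finset.Icc 1 k, p i
      ≤ ∑ k ∈ Finset.Icc 1 D, ∏ i ∈ Finset.Icc 1 k,
          (if i = d then p d + ζ else if i = d + 1 then p (d + 1) - ζ else p i) := by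
  set q : ℕ → ℝ := fun i => if i = d then p d + ζ else if i = d + 1 then p (d + 1) - ζ else p i
    with hq
  -- monotonicity of p on [1, D]
  have mono' : ∀ i j, 1 ≤ i → i ≤ j → j ≤ D → p j ≤ p i := by
    intro i j h1 hij hjD
    induction j with
    | zero => omega
    | succ n ih =>
      rcases Nat.eq_or_lt_of_le hij with h | h
      · exact le_of_eq (by rw [h])
      · exact (hmono n (by omega) (by omega)).trans (ih (by omega) (by omega))
  have pnn : ∀ i, 1 ≤ i → i ≤ D → 0 ≤ p i := fun i h1 h2 =>
    hpD.trans (mono' i D h1 h2 le_rfl)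
  -- notation
  set P : ℝ := ∏ i ∈ Icc 1 (d - 1), p i with hP
  set r : ℝ := p (d + 1) with hr
  set T : ℕ → ℝ := fun k => ∏ i ∈ Icc (d + 2) k, p i with hT
  have hPnn : 0 ≤ P := Finset.prod_nonneg fun i hi => by
    simp only [mem_Icc] at hi; exact pnn i hi.1 (by omega)
  have hrnn : 0 ≤ r := pnn (d + 1) (by omega) (by omega)
  -- splitting a product over Icc 1 k at positions d, d+1
  have prodsplit : ∀ (f : ℕ → ℝ) (k : ℕ), d + 1 ≤ k →
      ∏ i ∈ Icc 1 k, f i =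
        ((∏ i ∈ Icc 1 (d - 1), f i) * f d * f (d + 1)) * ∏ i ∈ Icc (d + 2) k, f i := by
    intro f k hk
    have e0 : Icc 1 k = Ioc 0 k := by ext x; simp only [mem_Icc, mem_Ioc, mem_singleton]; omega
    have e1 : Icc 1 (d - 1) = Ioc 0 (d - 1) := by ext x; simp only [mem_Icc, mem_Ioc, mem_singleton]; omega
    have e2 : Icc (d + 2) k = Ioc (d + 1) k := by ext x; simp only [mem_Icc, mem_Ioc, mem_singleton]; omega
    have s1 : Ioc (d - 1) d = {d} := by ext x; simp only [mem_Icc, mem_Ioc, mem_singleton]; omega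
    have s2 : Ioc d (d + 1) = {d + 1} := by ext x; simp only [mem_Icc, mem_Ioc, mem_singleton]; omega
    rw [e0, e1, e2,
      ← Finset.prod_Ioc_consecutive f (Nat.zero_le (d - 1)) (show d - 1 ≤ k by omega),
      ← Finset.prod_Ioc_consecutive f (show d - 1 ≤ d by omega) (show d ≤ k by omega),
      ← Finset.prod_Ioc_consecutive f (show d ≤ d + 1 by omega) hk,
      s1, s2, Finset.prod_singleton, Finset.prod_singleton]
    ring
  -- splitting a product over Icc 1 d at position d
  have prodsplitd : ∀ (f : ℕ → ℝ),
      ∏ i ∈ Icc 1 d, f i = (∏ i ∈ Icc 1 (d - 1), f i) * f d := by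
    intro f
    have e0 : Icc 1 d = Ioc 0 d := by ext x; simp only [mem_Icc, mem_Ioc, mem_singleton]; omega
    have e1 : Icc 1 (d - 1) = Ioc 0 (d - 1) := by ext x; simp only [mem_Icc, mem_Ioc, mem_singleton]; omega
    have s1 : Ioc (d - 1) d = {d} := by ext x; simp only [mem_Icc, mem_Ioc, mem_singleton]; omega
    rw [e0, e1,
      ← Finset.prod_Ioc_consecutive f (Nat.zero_le (d - 1)) (show d - 1 ≤ d by omega),
      s1, Finset.prod_singleton]
  -- splitting the outer sum at position d
  have sumsplit : ∀ (g : ℕ → ℝ),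
      ∑ k ∈ Icc 1 D, g k = (∑ k ∈ Icc 1 (d - 1), g k) + g d + ∑ k ∈ Icc (d + 1) D, g k := by
    intro g
    have e0 : Icc 1 D = Ioc 0 D := by ext x; simp only [mem_Icc, mem_Ioc, mem_singleton]; omega
    have e1 : Icc 1 (d - 1) = Ioc 0 (d - 1) := by ext x; simp only [mem_Icc, mem_Ioc, mem_singleton]; omega
    have e2 : Icc (d + 1) D = Ioc d D := by ext x; simp only [mem_Icc, mem_Ioc, mem_singleton]; omega
    have s1 : Ioc (d - 1) d = {d} := by ext x; simp only [mem_Icc, mem_Ioc, mem_singleton]; omega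
    rw [e0, e1, e2,
      ← Finset.sum_Ioc_consecutive g (Nat.zero_le (d - 1)) (show d - 1 ≤ D by omega),
      ← Finset.sum_Ioc_consecutive g (show d - 1 ≤ d by omega) (show d ≤ D by omega),
      s1, Finset.sum_singleton]
    ring
  -- q agrees with p away from d, d+1
  have qpre : ∀ k, k ≤ d - 1 → ∏ i ∈ Icc 1 k, q i = ∏ i ∈ Icc 1 k, p i := by
    intro k hk
    refine Finset.prod_congr rfl fun i hi => ?_
    simp only [mem_Icc] at hi
    simp only [hq]
    rw [if_neg (by omega), if_neg (by omega)]
  have qtail : ∀ k, ∏ i ∈ Icc (d + 2) k, q i = T k := by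
    intro k
    refine Finset.prod_congr rfl fun i hi => ?_
    simp only [mem_Icc] at hi
    simp only [hq]
    rw [if_neg (by omega), if_neg (by omega)]
  have qprefix : ∏ i ∈ Icc 1 (d - 1), q i = P := qpre (d - 1) le_rfl
  have qd : q d = p d + ζ := by simp [hq]
  have qd1 : q (d + 1) = p (d + 1) - ζ := by simp only [hq]; rw [if_neg (by omega)]; simp [hr]
  -- rewrite both sides
  rw [sumsplit (fun k => ∏ i ∈ Icc 1 k, p i), sumsplit (fun k => ∏ i ∈ Icc 1 k, q i)]
  have hpre : ∑ k ∈ Icc 1 (d - 1), ∏ i ∈ Icc 1 k, q i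
      = ∑ k ∈ Icc 1 (d - 1), ∏ i ∈ Icc 1 k, p i := by
    refine Finset.sum_congr rfl fun k hk => ?_
    simp only [mem_Icc] at hk
    exact qpre k hk.2
  rw [hpre]
  have hmid : ∏ i ∈ Icc 1 d, q i = P * p d + P * ζ := by
    rw [prodsplitd q, qprefix, qd]; ring
  have hmidp : ∏ i ∈ Icc 1 d, p i = P * p d := (prodsplitd p)
  have htailq : ∀ k ∈ Icc (d + 1) D, ∏ i ∈ Icc 1 k, q i
      = (P * (p d + ζ) * (r - ζ)) * T k := by
    intro k hk
    simp only [mem_Icc] at hk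
    rw [prodsplit q k hk.1, qprefix, qd, qd1, qtail, hr]
  have htailp : ∀ k ∈ Icc (d + 1) D, ∏ i ∈ Icc 1 k, p i
      = (P * p d * r) * T k := by
    intro k hk
    simp only [mem_Icc] at hk
    rw [prodsplit p k hk.1, hr, hT]
  rw [Finset.sum_congr rfl htailq, Finset.sum_congr rfl htailp, hmid, hmidp,
    ← Finset.mul_sum, ← Finset.mul_sum]
  set S : ℝ := ∑ k ∈ Icc (d + 1) D, T k with hS
  -- suffices: key inequality
  have key : (p d + ζ - r) * S ≤ 1 := by
    have hcnn : 0 ≤ p d + ζ - r := by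
      have := hmono d (by omega) hdD
      simp only [hr]; linarith
    have hTle : ∀ k ∈ Icc (d + 1) D, T k ≤ r ^ (k - (d + 1)) := by
      intro k hk
      simp only [mem_Icc] at hk
      have : T k ≤ ∏ _i ∈ Icc (d + 2) k, r := by
        refine Finset.prod_le_prod (fun i hi => ?_) (fun i hi => ?_) <;>
          simp only [mem_Icc] at hi
        · exact pnn i (by omega) (by omega)
        · exact mono' (d + 1) i (by omega) (by omega) (by omega)
      rwa [Finset.prod_const, Nat.card_Icc, show k + 1 - (d + 2) = k - (d + 1) by omega] at this
    have hSle : S ≤ ∑ j ∈ range (D - d), r ^ j := by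
      calc S ≤ ∑ k ∈ Icc (d + 1) D, r ^ (k - (d + 1)) := Finset.sum_le_sum hTle
        _ = ∑ j ∈ range (D - d), r ^ j := by
          rw [show Icc (d + 1) D = Ico (d + 1) (D + 1) by rw [Finset.Ico_add_one_right_eq_Icc],
            Finset.sum_Ico_eq_sum_range]
          refine Finset.sum_congr (by congr 1; omega) fun j _ => by
            congr 1; omega
    have hSnn : 0 ≤ S := by
      refine Finset.sum_nonneg fun k hk => Finset.prod_nonneg fun i hi => ?_
      simp only [mem_Icc] at hk hi
      exact pnn i (by omega) (by omega)
    have hgeom : (1 - r) * ∑ j ∈ range (D - d), r ^ j = 1 - r ^ (D - d) := by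
      have := geom_sum_mul r (D - d)
      nlinarith [this]
    have hrpow : 0 ≤ r ^ (D - d) := pow_nonneg hrnn _
    calc (p d + ζ - r) * S ≤ (1 - r) * S := by
          apply mul_le_mul_of_nonneg_right _ hSnn
          linarith
      _ ≤ (1 - r) * ∑ j ∈ range (D - d), r ^ j := by
          apply mul_le_mul_of_nonneg_left hSle
          have : 0 ≤ 1 - r := by linarith [mono' 1 (d+1) le_rfl (by omega) (by omega)]
          exact this
      _ = 1 - r ^ (D - d) := hgeom
      _ ≤ 1 := by linarith
  nlinarith [mul_nonneg hPnn hζ, mul_nonneg (mul_nonneg hPnn hζ) (sub_nonneg.2 key)]
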